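/- Let n ≥ 2 and let μ be the uniform probability measure on the sphere S^{n−1}(r) = {v ∈ ℝ^n : ‖v‖ = r} for some r > 0. Then for every u ∈ ℝ^n, the integral ∫_{S^{n−1}(r)} ‖u − v‖^{2−n} dμ(v) is finite. -/

import Mathlib

open MeasureTheory Metric Set
open scoped ENNReal NNReal RealInnerProductSpace


lemma flat_bound (ι : Type*) [Fintype ι] :
    ∃ C : ℝ≥0∞, C ≠ ⊤ ∧ ∀ (x : EuclideanSpace ℝ ι) (ρ : ℝ), 0 ≤ ρ →
      μH[(Fintype.card ι : ℝ)] (Metric.closedBall x ρ)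
        ≤ C * ENNReal.ofReal ρ ^ (Fintype.card ι) := by
  classical
  set m := Fintype.card ι with hm
  set K : ℝ≥0 := (m : ℝ≥0) ^ (1 / (2:ℝ≥0∞)).toReal with hK
  refine ⟨(K : ℝ≥0∞) ^ (m : ℝ) * 2 ^ m, ?_, ?_⟩
  · exact ENNReal.mul_ne_top
      (ENNReal.rpow_lt_top_of_nonneg (Nat.cast_nonneg m) ENNReal.coe_ne_top).ne
      (by simp [ENNReal.pow_ne_top])
  intro x ρ hρ
  have hanti : AntilipschitzWith K (WithLp.equiv 2 (∀ _ : ι, ℝ)) :=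
    PiLp.antilipschitzWith_ofLp 2 _
  have h1 := hanti.le_hausdorffMeasure_image (d := (m : ℝ)) (Nat.cast_nonneg m)
    (Metric.closedBall x ρ)
  have hsub : (WithLp.equiv 2 (∀ _ : ι, ℝ)) '' (Metric.closedBall x ρ) ⊆
      Metric.closedBall ((WithLp.equiv 2 (∀ _ : ι, ℝ)) x) ρ := by
    rintro - ⟨v, hv, rfl⟩
    rw [Metric.mem_closedBall] at hv ⊢
    calc dist ((WithLp.equiv 2 (∀ _ : ι, ℝ)) v) ((WithLp.equiv 2 (∀ _ : ι, ℝ)) x)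
        ≤ (1:ℝ≥0) * dist v x := (PiLp.lipschitzWith_ofLp 2 _).dist_le_mul v x
      _ ≤ ρ := by simpa using hv
  have h2 : μH[(m : ℝ)] ((WithLp.equiv 2 (∀ _ : ι, ℝ)) '' (Metric.closedBall x ρ))
      ≤ ENNReal.ofReal ((2 * ρ) ^ m) := by
    calc μH[(m : ℝ)] ((WithLp.equiv 2 (∀ _ : ι, ℝ)) '' (Metric.closedBall x ρ))
        ≤ μH[(m : ℝ)] (Metric.closedBall ((WithLp.equiv 2 (∀ _ : ι, ℝ)) x) ρ) :=
          measure_mono hsub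
      _ = volume (Metric.closedBall ((WithLp.equiv 2 (∀ _ : ι, ℝ)) x) ρ) := by
          rw [show ((m:ℝ)) = ((Fintype.card ι : ℕ) : ℝ) from by rw [hm],
            hausdorffMeasure_pi_real]
      _ = ENNReal.ofReal ((2 * ρ) ^ m) := Real.volume_pi_closedBall _ hρ
  calc μH[(m : ℝ)] (Metric.closedBall x ρ)
      ≤ (K : ℝ≥0∞) ^ (m : ℝ) * ENNReal.ofReal ((2 * ρ) ^ m) := by
        exact h1.trans (mul_le_mul_right h2 _)
    _ = (K : ℝ≥0∞) ^ (m : ℝ) * 2 ^ m * ENNReal.ofReal ρ ^ m := by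
        rw [ENNReal.ofReal_pow (by positivity), ENNReal.ofReal_mul (by norm_num),
          mul_pow, mul_assoc]
        norm_num

lemma sqle {α β : ℝ} (hα : 0 ≤ α) (hβ : 0 ≤ β) (h : α ^ 2 ≤ β ^ 2) : α ≤ β := by
  nlinarith


lemma cap_anti {r a a' F F' dvw dff : ℝ} (hr : 0 < r)
    (hav : r/2 ≤ a) (haw : r/2 ≤ a')
    (hF0 : 0 ≤ F) (hF'0 : 0 ≤ F') (hdff0 : 0 ≤ dff) (hdvw0 : 0 ≤ dvw)
    (hv2 : r^2 = a^2 + F^2) (hw2 : r^2 = a'^2 + F'^2)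
    (hFF' : |F' - F| ≤ dff)
    (hd : dvw^2 = (a - a')^2 + dff^2) : dvw ≤ 3 * dff := by
  have hFF2 : (F' - F)^2 ≤ dff^2 := by
    nlinarith [sq_abs (F' - F), abs_nonneg (F' - F)]
  have hFr : F ≤ r := by nlinarith
  have hF'r : F' ≤ r := by nlinarith
  have key : a^2 - a'^2 = F'^2 - F^2 := by linarith
  have e1 : (a - a')^2 * (a + a')^2 = (F' - F)^2 * (F' + F)^2 := by
    have h' : (a - a')^2 * (a + a')^2 = (a^2 - a'^2)^2 := by ring
    rw [h', key]; ring
  have e3 : (F' + F)^2 ≤ (2*r)^2 := by nlinarith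
  have e4 : r^2 ≤ (a + a')^2 := by nlinarith
  have e5 : (a - a')^2 * r^2 ≤ dff^2 * (2*r)^2 := by
    calc (a-a')^2 * r^2 ≤ (a-a')^2 * (a+a')^2 := mul_le_mul_of_nonneg_left e4 (sq_nonneg _)
      _ = (F'-F)^2 * (F'+F)^2 := e1
      _ ≤ dff^2 * (2*r)^2 := mul_le_mul hFF2 e3 (sq_nonneg _) (sq_nonneg _)
  have e6 : (a - a')^2 ≤ 4 * dff^2 := by
    have hrr : (0:ℝ) < r^2 := by positivity
    nlinarith [e5]
  have h9 : dvw ^ 2 ≤ (3 * dff)^2 := by nlinarith [e6, hd]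
  exact sqle hdvw0 (by positivity) h9

lemma cap_bound (m : ℕ) (r : ℝ) (hr : 0 < r) :
    ∃ C : ℝ≥0∞, C ≠ ⊤ ∧ ∀ (x : EuclideanSpace ℝ (Fin (m+2))) (ρ : ℝ), 0 < ρ → ρ ≤ r / 2 →
      μH[(m+1 : ℝ)] (Metric.sphere (0 : EuclideanSpace ℝ (Fin (m+2))) r ∩ Metric.closedBall x ρ)
        ≤ C * ENNReal.ofReal ρ ^ (m+1) := by
  classical
  obtain ⟨C1, hC1top, hC1⟩ := flat_bound {i : Fin (m+2) // i ≠ 0}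
  have hcard : Fintype.card {i : Fin (m+2) // i ≠ 0} = m + 1 := by
    have := Fintype.card_subtype_compl (fun i : Fin (m+2) => i = 0)
    simpa [Fintype.card_subtype_eq] using this
  have hd0 : (0:ℝ) ≤ (m:ℝ) + 1 := by positivity
  have hdcast : (m:ℝ) + 1 = ((Fintype.card {i : Fin (m+2) // i ≠ 0} : ℕ) : ℝ) := by
    rw [hcard]; push_cast; ring
  refine ⟨(3:ℝ≥0∞) ^ ((m:ℝ) + 1) * (C1 * 2 ^ (m+1)), ?_, ?_⟩
  · exact ENNReal.mul_ne_top (ENNReal.rpow_lt_top_of_nonneg hd0 (by norm_num)).ne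
      (ENNReal.mul_ne_top hC1top (by simp))
  intro x ρ hρ hρr
  rcases (Metric.sphere (0 : EuclideanSpace ℝ (Fin (m+2))) r ∩ Metric.closedBall x ρ).eq_empty_or_nonempty
    with he | ⟨p, hpS, hpB⟩
  · rw [he]; simp
  have hpnorm : ‖p‖ = r := by simpa using hpS
  -- an orthonormal basis whose first vector is `r⁻¹ • p`
  have hone : Orthonormal ℝ (({0} : Set (Fin (m+2))).restrict (fun _ => r⁻¹ • p)) := by
    constructor
    · intro i
      show ‖r⁻¹ • p‖ = 1
      rw [norm_smul, hpnorm, norm_inv, Real.norm_eq_abs, abs_of_pos hr, inv_mul_cancel₀ hr.ne']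
    · intro i j hij
      exact absurd (Subtype.ext ((Set.eq_of_mem_singleton i.2).trans
        (Set.eq_of_mem_singleton j.2).symm)) hij
  obtain ⟨b, hb⟩ := Orthonormal.exists_orthonormalBasis_extension_of_card_eq (𝕜 := ℝ)
    (by simp) hone
  have hb0 : b 0 = r⁻¹ • p := hb 0 rfl
  set f : EuclideanSpace ℝ (Fin (m+2)) → EuclideanSpace ℝ {i : Fin (m+2) // i ≠ 0} :=
    fun v => WithLp.toLp 2 (fun i : {i : Fin (m+2) // i ≠ 0} => b.repr v i.1) with hf
  have hsplit : ∀ g : Fin (m+2) → ℝ, ∑ j, g j = g 0 + ∑ i : {i : Fin (m+2) // i ≠ 0}, g i.1 := by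
    intro g
    rw [← Fintype.sum_subtype_add_sum_subtype (fun i : Fin (m+2) => i = 0) g]
    congr 1
    · simp
      rfl
  have hnormsq : ∀ v : EuclideanSpace ℝ (Fin (m+2)),
      ‖v‖ ^ 2 = (b.repr v 0) ^ 2 + ‖f v‖ ^ 2 := by
    intro v
    have h1 : ‖v‖ ^ 2 = ∑ j, (b.repr v j) ^ 2 := by
      have e : ‖v‖ = Real.sqrt (∑ j, ‖b.repr v j‖ ^ 2) := by
        rw [← b.repr.norm_map v]; exact EuclideanSpace.norm_eq _
      rw [e, Real.sq_sqrt (by positivity)]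
      simp [Real.norm_eq_abs, sq_abs]
    have h2 : ‖f v‖ ^ 2 = ∑ i : {i : Fin (m+2) // i ≠ 0}, (b.repr v i.1) ^ 2 := by
      rw [EuclideanSpace.norm_eq, Real.sq_sqrt (by positivity)]
      simp [hf, Real.norm_eq_abs, sq_abs]
    rw [h1, h2, hsplit (fun j => (b.repr v j) ^ 2)]
  have hdistsq : ∀ v w : EuclideanSpace ℝ (Fin (m+2)), dist v w ^ 2 =
      (b.repr v 0 - b.repr w 0) ^ 2 + dist (f v) (f w) ^ 2 := by
    intro v w
    have h1 : dist v w ^ 2 = ∑ j, (b.repr v j - b.repr w j) ^ 2 := by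
      have e : dist v w = Real.sqrt (∑ j, dist (b.repr v j) (b.repr w j) ^ 2) := by
        rw [← b.repr.dist_map v w]; exact EuclideanSpace.dist_eq _ _
      rw [e, Real.sq_sqrt (by positivity)]
      simp [Real.dist_eq, sq_abs]
    have h2 : dist (f v) (f w) ^ 2
        = ∑ i : {i : Fin (m+2) // i ≠ 0}, (b.repr v i.1 - b.repr w i.1) ^ 2 := by
      rw [EuclideanSpace.dist_eq, Real.sq_sqrt (by positivity)]
      simp [hf, Real.dist_eq, sq_abs]
    rw [h1, h2, hsplit (fun j => (b.repr v j - b.repr w j) ^ 2)]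
  -- membership facts
  have hmem : ∀ v ∈ Metric.sphere (0 : EuclideanSpace ℝ (Fin (m+2))) r ∩ Metric.closedBall x ρ,
      r / 2 ≤ b.repr v 0 ∧ ‖v‖ = r := by
    rintro v ⟨hvS, hvB⟩
    have hvnorm : ‖v‖ = r := by simpa using hvS
    have hvp : dist v p ≤ r := by
      calc dist v p ≤ dist v x + dist p x := dist_triangle_right v p x
        _ ≤ ρ + ρ := add_le_add (Metric.mem_closedBall.mp hvB) (Metric.mem_closedBall.mp hpB)
        _ ≤ r := by linarith
    have hinner : r ^ 2 / 2 ≤ ⟪p, v⟫ := by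
      have hexp := norm_sub_sq_real v p
      rw [hvnorm, hpnorm] at hexp
      have hvp2 : ‖v - p‖ ^ 2 ≤ r ^ 2 := by
        have h' : ‖v - p‖ ≤ r := by rwa [← dist_eq_norm]
        nlinarith [norm_nonneg (v - p)]
      have hcomm : ⟪v, p⟫ = ⟪p, v⟫ := real_inner_comm p v
      linarith [hexp, hvp2]
    have hrepr : b.repr v 0 = r⁻¹ * ⟪p, v⟫ := by
      rw [b.repr_apply_apply, hb0, real_inner_smul_left]
    refine ⟨?_, hvnorm⟩
    rw [hrepr]
    have h' := mul_le_mul_of_nonneg_left hinner (inv_nonneg.mpr hr.le)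
    calc r/2 = r⁻¹ * (r^2/2) := by field_simp
      _ ≤ r⁻¹ * ⟪p, v⟫ := h'
  -- antilipschitz estimate on the cap
  have hanti : ∀ v ∈ Metric.sphere (0 : EuclideanSpace ℝ (Fin (m+2))) r ∩ Metric.closedBall x ρ,
      ∀ w ∈ Metric.sphere (0 : EuclideanSpace ℝ (Fin (m+2))) r ∩ Metric.closedBall x ρ,
      dist v w ≤ 3 * dist (f v) (f w) := by
    intro v hv w hw
    obtain ⟨hav, hvn⟩ := hmem v hv
    obtain ⟨haw, hwn⟩ := hmem w hw
    refine cap_anti hr hav haw (norm_nonneg (f v)) (norm_nonneg (f w)) dist_nonneg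
      dist_nonneg ?_ ?_ ?_ (hdistsq v w)
    · rw [← hvn]; exact hnormsq v
    · rw [← hwn]; exact hnormsq w
    · have h := abs_norm_sub_norm_le (f w) (f v)
      rwa [norm_sub_rev, ← dist_eq_norm] at h
  -- pass to the subtype and project
  set s := Metric.sphere (0 : EuclideanSpace ℝ (Fin (m+2))) r ∩ Metric.closedBall x ρ with hsdef
  let g : s → EuclideanSpace ℝ {i : Fin (m+2) // i ≠ 0} := fun y => f y.1
  have hg : AntilipschitzWith 3 g := by
    rw [antilipschitzWith_iff_le_mul_dist]
    intro y z
    rw [Subtype.dist_eq]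
    have := hanti y.1 y.2 z.1 z.2
    simpa using this
  have himg : g '' Set.univ ⊆ Metric.closedBall (f p) (2 * ρ) := by
    rintro - ⟨y, -, rfl⟩
    rw [Metric.mem_closedBall]
    have h1 : dist (g y) (f p) ≤ dist (y : EuclideanSpace ℝ (Fin (m+2))) p := by
      have hd := hdistsq (y : EuclideanSpace ℝ (Fin (m+2))) p
      exact sqle dist_nonneg dist_nonneg (by nlinarith [sq_nonneg (b.repr y.1 0 - b.repr p 0)])
    have h2 : dist (y : EuclideanSpace ℝ (Fin (m+2))) p ≤ 2 * ρ := by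
      obtain ⟨-, hyB⟩ := y.2
      calc dist (y : EuclideanSpace ℝ (Fin (m+2))) p
          ≤ dist (y : EuclideanSpace ℝ (Fin (m+2))) x + dist p x := dist_triangle_right _ _ _
        _ ≤ ρ + ρ := add_le_add (Metric.mem_closedBall.mp hyB) (Metric.mem_closedBall.mp hpB)
        _ = 2 * ρ := by ring
    exact h1.trans h2
  have hμs : μH[(m:ℝ)+1] s = μH[(m:ℝ)+1] (Set.univ : Set s) := by
    conv_lhs => rw [← Subtype.coe_image_univ s]
    exact Isometry.hausdorffMeasure_image isometry_subtype_coe (Or.inl hd0) _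
  have hstep := hg.le_hausdorffMeasure_image (d := (m:ℝ)+1) hd0 Set.univ
  have hball : μH[(m:ℝ)+1] (g '' Set.univ) ≤ C1 * ENNReal.ofReal (2*ρ) ^ (m+1) := by
    calc μH[(m:ℝ)+1] (g '' Set.univ)
        ≤ μH[(m:ℝ)+1] (Metric.closedBall (f p) (2*ρ)) := measure_mono himg
      _ ≤ C1 * ENNReal.ofReal (2*ρ) ^ (m+1) := by
          have h := hC1 (f p) (2*ρ) (by positivity)
          rw [hcard] at h
          push_cast at h ⊢
          exact h
  calc μH[(m:ℝ)+1] s = μH[(m:ℝ)+1] (Set.univ : Set s) := hμs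
    _ ≤ ((3:ℝ≥0) : ℝ≥0∞) ^ ((m:ℝ)+1) * μH[(m:ℝ)+1] (g '' Set.univ) := hstep
    _ ≤ (3:ℝ≥0∞) ^ ((m:ℝ)+1) * (C1 * ENNReal.ofReal (2*ρ) ^ (m+1)) := by
          have h3 : ((3:ℝ≥0) : ℝ≥0∞) = (3:ℝ≥0∞) := by norm_cast
          rw [← h3]
          exact mul_le_mul_right hball _
    _ = (3:ℝ≥0∞) ^ ((m:ℝ)+1) * (C1 * 2 ^ (m+1)) * ENNReal.ofReal ρ ^ (m+1) := by
          rw [ENNReal.ofReal_mul (by norm_num), ENNReal.ofReal_ofNat, mul_pow]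
          ring

lemma sphere_meas_lt_top (m : ℕ) (r : ℝ) (hr : 0 < r) :
    μH[(m:ℝ)+1] (Metric.sphere (0 : EuclideanSpace ℝ (Fin (m+2))) r) < ⊤ := by
  obtain ⟨C, hCtop, hC⟩ := cap_bound m r hr
  obtain ⟨t, ht⟩ := (isCompact_sphere (0 : EuclideanSpace ℝ (Fin (m+2))) r).elim_finite_subcover
    (fun p : EuclideanSpace ℝ (Fin (m+2)) => Metric.ball p (r/4))
    (fun p => Metric.isOpen_ball)
    (fun v hv => Set.mem_iUnion.mpr ⟨v, Metric.mem_ball_self (by positivity)⟩)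
  calc μH[(m:ℝ)+1] (Metric.sphere (0 : EuclideanSpace ℝ (Fin (m+2))) r)
      ≤ μH[(m:ℝ)+1] (⋃ i ∈ t,
          Metric.sphere (0 : EuclideanSpace ℝ (Fin (m+2))) r ∩ Metric.closedBall i (r/4)) := by
        apply measure_mono
        intro v hv
        obtain ⟨i, hit, hvi⟩ := Set.mem_iUnion₂.mp (ht hv)
        exact Set.mem_iUnion₂.mpr ⟨i, hit, hv, Metric.ball_subset_closedBall hvi⟩
    _ ≤ ∑ i ∈ t, μH[(m:ℝ)+1]
          (Metric.sphere (0 : EuclideanSpace ℝ (Fin (m+2))) r ∩ Metric.closedBall i (r/4)) :=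
        measure_biUnion_finset_le _ _
    _ < ⊤ := by
        apply ENNReal.sum_lt_top.mpr
        intro i _
        exact lt_of_le_of_lt (hC i (r/4) (by positivity) (by linarith))
          (ENNReal.mul_lt_top hCtop.lt_top (ENNReal.pow_lt_top ENNReal.ofReal_lt_top))

lemma riesz_lt_top (m : ℕ) (r : ℝ) (hr : 0 < r) (u : EuclideanSpace ℝ (Fin (m+2))) :
    ∫⁻ v in Metric.sphere (0 : EuclideanSpace ℝ (Fin (m+2))) r,
      ENNReal.ofReal (‖u - v‖ ^ ((2:ℝ) - ((m+2:ℕ):ℝ))) ∂μH[(m:ℝ)+1] < ⊤ := by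
  obtain ⟨C, hCtop, hC⟩ := cap_bound m r hr
  have htot := sphere_meas_lt_top m r hr
  set d : ℝ := (m:ℝ)+1 with hd
  set S := Metric.sphere (0 : EuclideanSpace ℝ (Fin (m+2))) r with hS
  set e : ℝ := (2:ℝ) - ((m+2:ℕ):ℝ) with he
  have he0 : e ≤ 0 := by rw [he]; push_cast; linarith
  set ρ0 := r/2 with hρ0
  have hρ0pos : 0 < ρ0 := by positivity
  set F : EuclideanSpace ℝ (Fin (m+2)) → ℝ≥0∞ := fun v => ENNReal.ofReal (‖u - v‖ ^ e) with hF
  have hsplit : S = (S \ Metric.closedBall u ρ0) ∪ (S ∩ Metric.closedBall u ρ0) :=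
    (Set.diff_union_inter _ _).symm
  have h1 : ∫⁻ v in S, F v ∂μH[d]
      ≤ ∫⁻ v in S \ Metric.closedBall u ρ0, F v ∂μH[d]
        + ∫⁻ v in S ∩ Metric.closedBall u ρ0, F v ∂μH[d] := by
    conv_lhs => rw [hsplit]
    exact lintegral_union_le _ _ _
  have hfar : ∫⁻ v in S \ Metric.closedBall u ρ0, F v ∂μH[d] < ⊤ := by
    have hb : ∀ v ∈ S \ Metric.closedBall u ρ0, F v ≤ ENNReal.ofReal (ρ0 ^ e) := by
      intro v hv
      apply ENNReal.ofReal_le_ofReal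
      apply Real.rpow_le_rpow_of_nonpos hρ0pos _ he0
      have h2 : ¬ dist v u ≤ ρ0 := by
        have := hv.2
        rwa [Metric.mem_closedBall] at this
      rw [← dist_eq_norm, dist_comm]
      linarith [not_le.mp h2]
    calc ∫⁻ v in S \ Metric.closedBall u ρ0, F v ∂μH[d]
        ≤ ∫⁻ _ in S \ Metric.closedBall u ρ0, ENNReal.ofReal (ρ0 ^ e) ∂μH[d] :=
          setLIntegral_mono measurable_const hb
      _ = ENNReal.ofReal (ρ0 ^ e) * μH[d] (S \ Metric.closedBall u ρ0) := setLIntegral_const _ _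
      _ ≤ ENNReal.ofReal (ρ0 ^ e) * μH[d] S := mul_le_mul_right (measure_mono Set.diff_subset) _
      _ < ⊤ := ENNReal.mul_lt_top ENNReal.ofReal_lt_top htot
  have hnear : ∫⁻ v in S ∩ Metric.closedBall u ρ0, F v ∂μH[d] < ⊤ := by
    set A : ℕ → Set (EuclideanSpace ℝ (Fin (m+2))) := fun k =>
      (S ∩ Metric.closedBall u (ρ0 / 2^k)) ∩ {v | ρ0 / 2^(k+1) < dist u v} with hA
    have hcover : S ∩ Metric.closedBall u ρ0 ⊆ {u} ∪ ⋃ k, A k := by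
      rintro v ⟨hvS, hvB⟩
      rcases eq_or_ne v u with rfl | hvu
      · exact Or.inl rfl
      right
      have ht0 : 0 < dist u v := dist_pos.mpr (Ne.symm hvu)
      have htρ : dist u v ≤ ρ0 := by
        rw [dist_comm]; exact Metric.mem_closedBall.mp hvB
      have hex : ∃ k : ℕ, ρ0 / 2^(k+1) < dist u v := by
        obtain ⟨k, hk⟩ := pow_unbounded_of_one_lt (ρ0 / dist u v) (by norm_num : (1:ℝ) < 2)
        refine ⟨k, ?_⟩
        rw [div_lt_iff₀ ht0] at hk
        rw [div_lt_iff₀ (by positivity : (0:ℝ) < 2^(k+1))]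
        nlinarith [pow_pos (zero_lt_two' ℝ) k, ht0, pow_succ (2:ℝ) k, mul_pos (pow_pos (zero_lt_two' ℝ) k) ht0]
      refine Set.mem_iUnion.mpr ⟨Nat.find hex, ⟨⟨hvS, ?_⟩, Nat.find_spec hex⟩⟩
      rcases Nat.eq_zero_or_pos (Nat.find hex) with h0 | hpos
      · rw [Metric.mem_closedBall, dist_comm, h0]
        simpa using htρ
      · obtain ⟨j, hj⟩ : ∃ j, Nat.find hex = j + 1 := ⟨Nat.find hex - 1, by omega⟩
        have hmin := Nat.find_min hex (m := j) (by omega)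
        rw [not_lt] at hmin
        rw [Metric.mem_closedBall, dist_comm, hj]
        exact hmin
    have h3 : ∫⁻ v in ({u} : Set (EuclideanSpace ℝ (Fin (m+2)))), F v ∂μH[d] = 0 := by
      haveI : NoAtoms (μH[d] : Measure (EuclideanSpace ℝ (Fin (m+2)))) :=
        Measure.noAtoms_hausdorff _ (by rw [hd]; positivity)
      have hz : (μH[d] : Measure (EuclideanSpace ℝ (Fin (m+2)))).restrict {u} = 0 :=
        Measure.restrict_eq_zero.mpr (this.measure_singleton u)
      rw [hz]; exact lintegral_zero_measure _
    have h5 : ∀ k, ∫⁻ v in A k, F v ∂μH[d]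
        ≤ (C * ENNReal.ofReal (ρ0 * 2^m)) * ENNReal.ofReal (2⁻¹:ℝ) ^ k := by
      intro k
      have hA0 : (0:ℝ) < ρ0 / 2^(k+1) := by positivity
      have hbk : ∀ v ∈ A k, F v ≤ ENNReal.ofReal ((ρ0 / 2^(k+1)) ^ e) := by
        rintro v ⟨-, hvk⟩
        apply ENNReal.ofReal_le_ofReal
        apply Real.rpow_le_rpow_of_nonpos hA0 _ he0
        rw [← dist_eq_norm]
        exact le_of_lt hvk
      have hAsub : A k ⊆ S ∩ Metric.closedBall u (ρ0 / 2^k) := Set.inter_subset_left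
      have hkρ : (0:ℝ) < ρ0 / 2^k := by positivity
      have hkr : ρ0 / 2^k ≤ r / 2 := by
        rw [hρ0]
        apply div_le_self (by positivity)
        exact one_le_pow₀ (by norm_num)
      have hBA : ρ0 / 2^k = 2 * (ρ0 / 2^(k+1)) := by
        field_simp
        ring
      have hone' : e + ((m+1:ℕ):ℝ) = 1 := by rw [he]; push_cast; ring
      have hid : (ρ0 / 2^(k+1)) ^ e * (ρ0 / 2^k) ^ (m+1) = (ρ0 * 2^m) * (2⁻¹:ℝ)^k := by
        calc (ρ0 / 2^(k+1)) ^ e * (ρ0 / 2^k) ^ (m+1)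
            = (2:ℝ)^(m+1) * ((ρ0 / 2^(k+1)) ^ e * (ρ0 / 2^(k+1)) ^ ((m+1:ℕ):ℝ)) := by
              rw [hBA, mul_pow, Real.rpow_natCast]
              ring
          _ = (2:ℝ)^(m+1) * (ρ0 / 2^(k+1)) ^ (e + ((m+1:ℕ):ℝ)) := by
              rw [Real.rpow_add hA0]
          _ = (2:ℝ)^(m+1) * (ρ0 / 2^(k+1)) := by rw [hone', Real.rpow_one]
          _ = (ρ0 * 2^m) * (2⁻¹:ℝ)^k := by
              rw [inv_pow]
              field_simp
              ring
      calc ∫⁻ v in A k, F v ∂μH[d]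
          ≤ ∫⁻ _ in A k, ENNReal.ofReal ((ρ0 / 2^(k+1)) ^ e) ∂μH[d] :=
            setLIntegral_mono measurable_const hbk
        _ = ENNReal.ofReal ((ρ0 / 2^(k+1)) ^ e) * μH[d] (A k) := setLIntegral_const _ _
        _ ≤ ENNReal.ofReal ((ρ0 / 2^(k+1)) ^ e) * (C * ENNReal.ofReal (ρ0 / 2^k) ^ (m+1)) :=
            mul_le_mul_right ((measure_mono hAsub).trans (hC u _ hkρ hkr)) _
        _ = (C * ENNReal.ofReal (ρ0 * 2^m)) * ENNReal.ofReal (2⁻¹:ℝ) ^ k := by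
            rw [← ENNReal.ofReal_pow (le_of_lt hkρ), mul_left_comm,
              ← ENNReal.ofReal_mul (Real.rpow_nonneg (le_of_lt hA0) e), hid,
              ENNReal.ofReal_mul (by positivity : (0:ℝ) ≤ ρ0 * 2^m),
              ENNReal.ofReal_pow (by norm_num : (0:ℝ) ≤ (2⁻¹:ℝ))]
            ring
    have h4 : ∫⁻ v in ⋃ k, A k, F v ∂μH[d] ≤ ∑' k, ∫⁻ v in A k, F v ∂μH[d] :=
      lintegral_iUnion_le _ _
    have h6 : ∑' k, ∫⁻ v in A k, F v ∂μH[d]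
        ≤ (C * ENNReal.ofReal (ρ0 * 2^m)) * ∑' k : ℕ, ENNReal.ofReal (2⁻¹:ℝ) ^ k := by
      rw [← ENNReal.tsum_mul_left]
      exact ENNReal.tsum_le_tsum h5
    have h7 : (∑' k : ℕ, ENNReal.ofReal (2⁻¹:ℝ) ^ k) = (1 - ENNReal.ofReal (2⁻¹:ℝ))⁻¹ :=
      ENNReal.tsum_geometric _
    have hq : (1 - ENNReal.ofReal (2⁻¹:ℝ))⁻¹ < ⊤ := by
      rw [ENNReal.inv_lt_top]
      exact tsub_pos_of_lt (ENNReal.ofReal_lt_one.mpr (by norm_num))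
    have h8 : ∫⁻ v in S ∩ Metric.closedBall u ρ0, F v ∂μH[d]
        ≤ ∫⁻ v in ({u} : Set (EuclideanSpace ℝ (Fin (m+2)))) ∪ ⋃ k, A k, F v ∂μH[d] :=
      lintegral_mono' (Measure.restrict_mono hcover le_rfl) le_rfl
    calc ∫⁻ v in S ∩ Metric.closedBall u ρ0, F v ∂μH[d]
        ≤ ∫⁻ v in ({u} : Set (EuclideanSpace ℝ (Fin (m+2)))) ∪ ⋃ k, A k, F v ∂μH[d] := h8
      _ ≤ ∫⁻ v in ({u} : Set (EuclideanSpace ℝ (Fin (m+2)))), F v ∂μH[d]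
            + ∫⁻ v in ⋃ k, A k, F v ∂μH[d] := lintegral_union_le _ _ _
      _ = ∫⁻ v in ⋃ k, A k, F v ∂μH[d] := by rw [h3, zero_add]
      _ ≤ (C * ENNReal.ofReal (ρ0 * 2^m)) * ∑' k : ℕ, ENNReal.ofReal (2⁻¹:ℝ) ^ k :=
          h4.trans h6
      _ < ⊤ := by
          rw [h7]
          exact ENNReal.mul_lt_top
            (ENNReal.mul_lt_top hCtop.lt_top ENNReal.ofReal_lt_top) hq
  exact lt_of_le_of_lt h1 (ENNReal.add_lt_top.mpr ⟨hfar, hnear⟩)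

/-- The Riesz kernel `‖u − v‖^{2−n}` is integrable with respect to the uniform probability
measure on the sphere of radius `r` in `ℝⁿ`, for every `u ∈ ℝⁿ` and `n ≥ 2`. -/
theorem riesz_kernel_integrable_sphere (n : ℕ) (hn : 2 ≤ n) (r : ℝ) (hr : 0 < r)
    (u : EuclideanSpace ℝ (Fin n))
    (μ : Measure (EuclideanSpace ℝ (Fin n)))
    (hμ : μ = (μH[((n : ℝ) - 1)] (Metric.sphere (0 : EuclideanSpace ℝ (Fin n)) r))⁻¹ •
      (μH[((n : ℝ) - 1)]).restrict (Metric.sphere (0 : EuclideanSpace ℝ (Fin n)) r)) :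
    ∫⁻ v, ENNReal.ofReal (‖u - v‖ ^ ((2 : ℝ) - n)) ∂μ < ⊤ := by
  obtain ⟨m, rfl⟩ : ∃ m, n = m + 2 := ⟨n - 2, by omega⟩
  have hdcast : ((m + 2 : ℕ) : ℝ) - 1 = (m : ℝ) + 1 := by push_cast; ring
  subst hμ
  rw [lintegral_smul_measure, hdcast]
  rcases eq_or_ne (μH[(m:ℝ)+1] (Metric.sphere (0 : EuclideanSpace ℝ (Fin (m+2))) r)) 0
    with h0 | h0
  · rw [Measure.restrict_eq_zero.mpr h0, lintegral_zero_measure, smul_zero]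
    simp
  · exact ENNReal.mul_lt_top (ENNReal.inv_lt_top.mpr (pos_iff_ne_zero.mpr h0))
      (riesz_lt_top m r hr u)
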